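/- arXiv:1412.3448 — 2 statements merged into one kernel-verified Lean document; each statement's English description precedes it below -/
import Mathlib

section
/- Let g ∈ ℂ^M, H ∈ ℂ^{M×N} with Hᴴg ≠ 0, q̃ ∈ ℂ^M, and real numbers σ_s² > 0, σ_i² > 0, P̄ > 0. Consider the scalar-source precoder subproblem: minimize φ(f) = (σ_s² + σ_i²)·Re(fᴴ(Hᴴg gᴴH)f) − 2σ_s²·Re((1 − q̃ᴴg)·gᴴHf) over f ∈ ℂ^N subject to ‖f‖₂² ≤ P̄. Suppose σ_s⁴·|1 − gᴴq̃|² > (σ_s² + σ_i²)²·P̄·‖Hᴴg‖₂². Then, with μ⋆ = σ_s²·P̄^{−1/2}·|1 − gᴴq̃|·‖Hᴴg‖₂ − (σ_s² + σ_i²)·‖Hᴴg‖₂², one has μ⋆ > 0 and f⋆ = σ_s²·(1 − gᴴq̃)·(μ⋆I_N + (σ_s² + σ_i²)·Hᴴg gᴴH)⁻¹·Hᴴg is a global minimizer of the problem, satisfying ‖f⋆‖₂² = P̄. -/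
open Matrix ComplexOrder

/-- The Euclidean norm ‖x‖₂ = √(xᴴx) of a complex vector. -/
noncomputable def eucNorm {n : ℕ} (x : Fin n → ℂ) : ℝ :=
  Real.sqrt ((star x ⬝ᵥ x).re)

lemma inner_equiv_symm_aux {n : ℕ} (x y : Fin n → ℂ) :
    inner ℂ ((WithLp.equiv 2 (Fin n → ℂ)).symm x) ((WithLp.equiv 2 (Fin n → ℂ)).symm y)
      = star x ⬝ᵥ y := by
  rw [dotProduct_comm]; rfl

lemma eucNorm_eq_norm {n : ℕ} (x : Fin n → ℂ) :
    eucNorm x = ‖(WithLp.equiv 2 (Fin n → ℂ)).symm x‖ := by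
  have h := inner_self_eq_norm_sq_to_K (𝕜 := ℂ)
    ((WithLp.equiv 2 (Fin n → ℂ)).symm x)
  rw [inner_equiv_symm_aux] at h
  unfold eucNorm
  rw [h]
  norm_cast
  exact Real.sqrt_sq (norm_nonneg _)

lemma dot_self_eq {n : ℕ} (x : Fin n → ℂ) :
    star x ⬝ᵥ x = (((eucNorm x) ^ 2 : ℝ) : ℂ) := by
  rw [eucNorm_eq_norm, ← inner_equiv_symm_aux,
    inner_self_eq_norm_sq_to_K]
  norm_cast

lemma eucNorm_nonneg {n : ℕ} (x : Fin n → ℂ) : 0 ≤ eucNorm x :=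
  Real.sqrt_nonneg _

lemma eucNorm_pos {n : ℕ} {x : Fin n → ℂ} (hx : x ≠ 0) : 0 < eucNorm x := by
  rw [eucNorm_eq_norm, norm_pos_iff]
  exact fun h => hx (by simpa using congrArg (WithLp.equiv 2 (Fin n → ℂ)) h)

lemma eucNorm_smul {n : ℕ} (k : ℂ) (x : Fin n → ℂ) :
    eucNorm (k • x) = ‖k‖ * eucNorm x := by
  rw [eucNorm_eq_norm, eucNorm_eq_norm,
    show (WithLp.equiv 2 (Fin n → ℂ)).symm (k • x)
      = k • (WithLp.equiv 2 (Fin n → ℂ)).symm x from rfl, norm_smul]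

lemma cauchy_dot {n : ℕ} (u f : Fin n → ℂ) :
    ‖star u ⬝ᵥ f‖ ≤ eucNorm u * eucNorm f := by
  rw [eucNorm_eq_norm, eucNorm_eq_norm,
    ← inner_equiv_symm_aux]
  exact norm_inner_le_norm _ _

lemma vmv_mulVec {n : ℕ} (u v f : Fin n → ℂ) :
    vecMulVec u v *ᵥ f = (v ⬝ᵥ f) • u := by
  ext i
  simp only [mulVec, dotProduct, vecMulVec_apply, Pi.smul_apply, smul_eq_mul,
    Finset.sum_mul]
  exact Finset.sum_congr rfl fun j _ => by ring

lemma vmv_mul {n : ℕ} (u v w x : Fin n → ℂ) :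
    vecMulVec u v * vecMulVec w x = (v ⬝ᵥ w) • vecMulVec u x := by
  ext i j
  simp only [mul_apply, vecMulVec_apply, Matrix.smul_apply, dotProduct, smul_eq_mul,
    Finset.sum_mul]
  exact Finset.sum_congr rfl fun k _ => by ring

lemma star_dot_comm {n : ℕ} (u f : Fin n → ℂ) :
    star f ⬝ᵥ u = (starRingEnd ℂ) (star u ⬝ᵥ f) := by
  simp [dotProduct, map_sum, mul_comm]

lemma sherman_aux {N : ℕ} (A : Matrix (Fin N) (Fin N) ℂ) (μs β a nu : ℝ)
    (hμ : μs ≠ 0) (hβ : β ≠ 0) (hβd : β = μs + a * nu ^ 2)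
    (hA2 : A * A = ((nu ^ 2 : ℝ) : ℂ) • A) :
    ((μs : ℂ) • 1 + ((a : ℝ) : ℂ) • A) *
      (((μs⁻¹ : ℝ) : ℂ) • 1 + ((-(a / (μs * β)) : ℝ) : ℂ) • A) = 1 := by
  have hβC : ((μs : ℂ) + (a:ℂ) * (nu:ℂ)^2) ≠ 0 := by
    rw [show ((μs : ℂ) + (a:ℂ)*(nu:ℂ)^2) = ((β:ℝ):ℂ) by rw [hβd]; push_cast; ring]
    exact_mod_cast hβ
  have hμC : (μs:ℂ) ≠ 0 := Complex.ofReal_ne_zero.mpr hμ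
  rw [add_mul, mul_add, mul_add]
  simp only [smul_mul_assoc, mul_smul_comm, one_mul, mul_one, smul_smul, hA2]
  match_scalars
  · field_simp
  · rw [hβd]
    push_cast
    field_simp
    ring

lemma coeff2_aux (μs β a nu : ℝ) (hμ : μs ≠ 0) (hβ : β ≠ 0)
    (hβd : β = μs + a * nu ^ 2) :
    ((μs⁻¹ : ℝ) : ℂ) + ((-(a / (μs * β)) : ℝ) : ℂ) * ((nu ^ 2 : ℝ) : ℂ)
      = ((β⁻¹ : ℝ) : ℂ) := by
  have : μs⁻¹ + (-(a / (μs * β))) * nu ^ 2 = β⁻¹ := by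
    rw [hβd] at hβ ⊢
    field_simp
    ring
  exact_mod_cast this


/-- scalar-source precoder, positive multiplier case: minimize
φ(f) = (σ_s²+σ_i²)Re(fᴴ(Hᴴg gᴴH)f) − 2σ_s²Re((1 − q̃ᴴg)gᴴHf) over ‖f‖₂² ≤ P̄.
If σ_s⁴|1 − gᴴq̃|² > (σ_s²+σ_i²)²P̄‖Hᴴg‖₂², then with
μ⋆ = σ_s²P̄^{−1/2}|1 − gᴴq̃|‖Hᴴg‖₂ − (σ_s²+σ_i²)‖Hᴴg‖₂² one has μ⋆ > 0, and
f⋆ = σ_s²(1 − gᴴq̃)(μ⋆I + (σ_s²+σ_i²)Hᴴg gᴴH)⁻¹Hᴴg is a global minimizer with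
‖f⋆‖₂² = P̄. -/
theorem scalar_precoder_positive_multiplier {M N : ℕ}
    (g : Fin M → ℂ) (H : Matrix (Fin M) (Fin N) ℂ) (hHg : Hᴴ *ᵥ g ≠ 0)
    (qt : Fin M → ℂ) (σs2 σi2 Pb : ℝ)
    (hσs : 0 < σs2) (hσi : 0 < σi2) (hPb : 0 < Pb)
    (hcase : σs2 ^ 2 * ‖1 - star g ⬝ᵥ qt‖ ^ 2
      > (σs2 + σi2) ^ 2 * Pb * (eucNorm (Hᴴ *ᵥ g)) ^ 2) :
    let u : Fin N → ℂ := Hᴴ *ᵥ g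
    let A : Matrix (Fin N) (Fin N) ℂ := vecMulVec u (star u)
    let φ : (Fin N → ℂ) → ℝ := fun f =>
      (σs2 + σi2) * (star f ⬝ᵥ (A *ᵥ f)).re
        - 2 * σs2 * ((1 - star qt ⬝ᵥ g) * (star u ⬝ᵥ f)).re
    let μs : ℝ := σs2 * (Real.sqrt Pb)⁻¹ * ‖1 - star g ⬝ᵥ qt‖ * eucNorm u
        - (σs2 + σi2) * (eucNorm u) ^ 2
    let fs : Fin N → ℂ :=
      ((σs2 : ℂ) * (1 - star g ⬝ᵥ qt)) •
        (((μs : ℂ) • 1 + ((σs2 + σi2 : ℝ) : ℂ) • A)⁻¹ *ᵥ u)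
    0 < μs ∧ (eucNorm fs) ^ 2 = Pb ∧
      ∀ f : Fin N → ℂ, (eucNorm f) ^ 2 ≤ Pb → φ fs ≤ φ f := by
  intro u A φ μs fs
  have hudef : u = Hᴴ *ᵥ g := rfl
  have hAdef : A = vecMulVec u (star u) := rfl
  have hφdef : ∀ f, φ f = (σs2 + σi2) * (star f ⬝ᵥ (A *ᵥ f)).re
      - 2 * σs2 * ((1 - star qt ⬝ᵥ g) * (star u ⬝ᵥ f)).re := fun f => rfl
  have hμdef : μs = σs2 * (Real.sqrt Pb)⁻¹ * ‖1 - star g ⬝ᵥ qt‖ * eucNorm u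
      - (σs2 + σi2) * (eucNorm u) ^ 2 := rfl
  have hfsdef : fs = ((σs2 : ℂ) * (1 - star g ⬝ᵥ qt)) •
      (((μs : ℂ) • 1 + ((σs2 + σi2 : ℝ) : ℂ) • A)⁻¹ *ᵥ u) := rfl
  set c : ℂ := 1 - star g ⬝ᵥ qt with hc
  set cA : ℝ := ‖c‖ with hcAdef
  set a : ℝ := σs2 + σi2 with ha
  set nu : ℝ := eucNorm u with hnudef
  set s : ℝ := Real.sqrt Pb with hs
  have ha0 : (0:ℝ) < a := by rw [ha]; linarith
  have hnu0 : 0 < nu := eucNorm_pos (hudef ▸ hHg)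
  have hsP : 0 < s := Real.sqrt_pos.mpr hPb
  have hsP2 : s ^ 2 = Pb := Real.sq_sqrt hPb.le
  have hcase' : a ^ 2 * Pb * nu ^ 2 < σs2 ^ 2 * cA ^ 2 := hcase
  have hcA0 : 0 < cA := by
    rcases (norm_nonneg c).lt_or_eq with h | h
    · exact (by rwa [hcAdef])
    · exfalso; rw [hcAdef, ← h] at hcase'
      nlinarith [mul_pos (mul_pos (mul_pos ha0 ha0) hPb) (mul_pos hnu0 hnu0)]
  have hsq : (a * (s * nu)) ^ 2 < (σs2 * cA) ^ 2 := by
    have e : (a * (s * nu)) ^ 2 = a ^ 2 * Pb * nu ^ 2 := by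
      rw [mul_pow, mul_pow, hsP2]; ring
    rw [e, mul_pow]; exact hcase'
  have hkey : a * (s * nu) < σs2 * cA := by
    nlinarith [hsq, mul_pos (mul_pos ha0 hsP) hnu0, mul_pos hσs hcA0]
  have hμ0 : 0 < μs := by
    rw [hμdef]
    have h2 : a * nu ^ 2 * s < σs2 * cA * nu := by
      nlinarith [mul_lt_mul_of_pos_right hkey hnu0]
    have h3 : a * nu ^ 2 < σs2 * cA * nu / s := (lt_div_iff₀ hsP).mpr h2
    have h4 : σs2 * s⁻¹ * cA * nu = σs2 * cA * nu / s := by field_simp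
    linarith
  refine ⟨hμ0, ?_⟩
  set β : ℝ := μs + a * nu ^ 2 with hβdef
  have hβ : β = σs2 * s⁻¹ * cA * nu := by rw [hβdef, hμdef]; ring
  have hβ0 : 0 < β :=
    hβ ▸ mul_pos (mul_pos (mul_pos hσs (inv_pos.mpr hsP)) hcA0) hnu0
  have hudot : star u ⬝ᵥ u = ((nu ^ 2 : ℝ) : ℂ) := dot_self_eq u
  have hA2 : A * A = ((nu ^ 2 : ℝ) : ℂ) • A := by rw [hAdef, vmv_mul, hudot]
  have hμC : (μs : ℂ) ≠ 0 := Complex.ofReal_ne_zero.mpr hμ0.ne'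
  have hβCe : ((μs : ℂ) + (a : ℂ) * (nu : ℂ) ^ 2) = ((β : ℝ) : ℂ) := by
    rw [hβdef]; push_cast; ring
  have hβC : ((μs : ℂ) + (a : ℂ) * (nu : ℂ) ^ 2) ≠ 0 := by
    rw [hβCe]; exact Complex.ofReal_ne_zero.mpr hβ0.ne'
  set B : Matrix (Fin N) (Fin N) ℂ := (μs : ℂ) • 1 + ((a : ℝ) : ℂ) • A with hB
  set C : Matrix (Fin N) (Fin N) ℂ :=
    ((μs⁻¹ : ℝ) : ℂ) • 1 + ((-(a / (μs * β)) : ℝ) : ℂ) • A with hCdef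
  have hBC : B * C = 1 := by
    rw [hB, hCdef]
    exact sherman_aux A μs β a nu hμ0.ne' hβ0.ne' hβdef hA2
  have hBinv : B⁻¹ = C := inv_eq_right_inv hBC
  have hCu : C *ᵥ u = ((β⁻¹ : ℝ) : ℂ) • u := by
    rw [hCdef, add_mulVec, smul_mulVec, smul_mulVec, one_mulVec,
      hAdef, vmv_mulVec, hudot, smul_smul, ← add_smul]
    rw [coeff2_aux μs β a nu hμ0.ne' hβ0.ne' hβdef]
  set k : ℂ := (σs2 : ℂ) * c * ((β⁻¹ : ℝ) : ℂ) with hk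
  have hfs2 : fs = k • u := by
    rw [hfsdef, hBinv, hCu, smul_smul, hk]
  have habsk : ‖k‖ = σs2 * cA * β⁻¹ := by
    rw [hk, norm_mul, norm_mul, Complex.norm_real, Complex.norm_real,
      Real.norm_eq_abs, Real.norm_eq_abs,
      abs_of_pos hσs, abs_of_pos (inv_pos.mpr hβ0), ← hcAdef]
  have hscA : σs2 * cA * β⁻¹ * nu = s := by
    rw [hβ]; field_simp
  have hPow : eucNorm fs ^ 2 = Pb := by
    rw [hfs2, eucNorm_smul, habsk, ← hnudef]
    calc (σs2 * cA * β⁻¹ * nu) ^ 2 = s ^ 2 := by rw [hscA]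
      _ = Pb := hsP2
  refine ⟨hPow, ?_⟩
  have hconj : (1 - star qt ⬝ᵥ g) = (starRingEnd ℂ) c := by
    rw [hc, map_sub, _root_.map_one, ← star_dot_comm]
  have hφt : ∀ f, φ f = a * (‖star u ⬝ᵥ f‖) ^ 2
      - 2 * σs2 * ((starRingEnd ℂ) c * (star u ⬝ᵥ f)).re := by
    intro f
    have h1 : star f ⬝ᵥ (A *ᵥ f)
        = (star u ⬝ᵥ f) * (starRingEnd ℂ) (star u ⬝ᵥ f) := by
      rw [hAdef, vmv_mulVec, dotProduct_smul, smul_eq_mul, star_dot_comm u f]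
    rw [hφdef, hconj, h1, Complex.mul_conj, Complex.ofReal_re,
      Complex.sq_norm]
  -- value at fs
  set r : ℝ := σs2 * β⁻¹ * nu ^ 2 with hr
  have hr0 : 0 < r := by
    rw [hr]; exact mul_pos (mul_pos hσs (inv_pos.mpr hβ0)) (pow_pos hnu0 2)
  have hts : star u ⬝ᵥ fs = ((r : ℝ) : ℂ) * c := by
    rw [hfs2, dotProduct_smul, smul_eq_mul, hudot, hk, hr]
    push_cast
    ring
  have habsts : ‖star u ⬝ᵥ fs‖ = r * cA := by
    rw [hts, norm_mul, Complex.norm_real, Real.norm_eq_abs, abs_of_pos hr0, ← hcAdef]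
  have hrets : ((starRingEnd ℂ) c * (star u ⬝ᵥ fs)).re = r * cA ^ 2 := by
    rw [hts, show (starRingEnd ℂ) c * (((r:ℝ):ℂ) * c) = ((r:ℝ):ℂ) * (c * (starRingEnd ℂ) c) by ring,
      Complex.mul_conj, ← Complex.ofReal_mul, Complex.ofReal_re, hcAdef,
      Complex.sq_norm]
  have hrcA : r * cA = nu * s := by
    have e : r * cA = σs2 * cA * β⁻¹ * nu * nu := by rw [hr]; ring
    rw [e, hscA]; ring
  -- the minimization
  intro f hf
  rw [hφt, hφt, habsts, hrets, hrcA]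
  clear_value u A φ μs fs c cA a nu s β B C k r
  set t : ℝ := ‖star u ⬝ᵥ f‖ with ht
  have ht0 : 0 ≤ t := norm_nonneg _
  have htle : t ≤ nu * s := by
    have h2 : eucNorm f ≤ s := by
      rw [hs]
      have h3 := Real.sqrt_le_sqrt hf
      rwa [Real.sqrt_sq (eucNorm_nonneg f)] at h3
    calc t = ‖star u ⬝ᵥ f‖ := ht
      _ ≤ eucNorm u * eucNorm f := cauchy_dot u f
      _ = nu * eucNorm f := by rw [← hnudef]
      _ ≤ nu * s := mul_le_mul_of_nonneg_left h2 hnu0.le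
  have hRe : ((starRingEnd ℂ) c * (star u ⬝ᵥ f)).re ≤ cA * t := by
    calc ((starRingEnd ℂ) c * (star u ⬝ᵥ f)).re
        ≤ ‖(starRingEnd ℂ) c * (star u ⬝ᵥ f)‖ := Complex.re_le_norm _
      _ = cA * t := by rw [norm_mul, Complex.norm_conj, ← hcAdef, ht]
  have hfac : 0 ≤ (nu * s - t) * (2 * (σs2 * cA) - a * (nu * s + t)) := by
    apply mul_nonneg (by linarith)
    have h5 : a * t ≤ a * (nu * s) := mul_le_mul_of_nonneg_left htle ha0.le
    have h7 : a * (nu * s + t) = a * (nu * s) + a * t := by ring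
    have h8 : a * (s * nu) = a * (nu * s) := by ring
    linarith [hkey]
  have hcA2 : r * cA ^ 2 = cA * (nu * s) := by
    rw [show r * cA ^ 2 = (r * cA) * cA by ring, hrcA]; ring
  rw [hcA2]
  have h9 : (nu * s - t) * (2 * (σs2 * cA) - a * (nu * s + t))
      = a * t ^ 2 - 2 * σs2 * (cA * t)
        - (a * (nu * s) ^ 2 - 2 * σs2 * (cA * (nu * s))) := by ring
  have h10 : 2 * σs2 * ((starRingEnd ℂ) c * (star u ⬝ᵥ f)).re
      ≤ 2 * σs2 * (cA * t) :=
    mul_le_mul_of_nonneg_left hRe (by linarith)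
  linarith [hfac, h9, h10]
end

section
/- Let g ∈ ℂ^M, H ∈ ℂ^{M×N} with Hᴴg ≠ 0, q̃ ∈ ℂ^M, and real numbers σ_s² > 0, σ_i² > 0, P̄ > 0. Consider the scalar-source precoder subproblem: minimize φ(f) = (σ_s² + σ_i²)·Re(fᴴ(Hᴴg gᴴH)f) − 2σ_s²·Re((1 − q̃ᴴg)·gᴴHf) over f ∈ ℂ^N subject to ‖f‖₂² ≤ P̄. Suppose σ_s⁴·|1 − gᴴq̃|² ≤ (σ_s² + σ_i²)²·P̄·‖Hᴴg‖₂². Then f⋆ = σ_s²·(1 − gᴴq̃)·Hᴴg / ((σ_s² + σ_i²)·gᴴHHᴴg) is a global minimizer of the problem, and it is feasible: ‖f⋆‖₂² ≤ P̄. -/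
open Matrix ComplexOrder

lemma eucNorm_sq {n : ℕ} (x : Fin n → ℂ) : (eucNorm x) ^ 2 = (star x ⬝ᵥ x).re := by
  have h : (0:ℂ) ≤ star x ⬝ᵥ x := dotProduct_star_self_nonneg x
  rw [eucNorm, Real.sq_sqrt (Complex.le_def.mp h).1]

lemma vecMulVec_mulVec' {n : ℕ} (u f : Fin n → ℂ) :
    vecMulVec u (star u) *ᵥ f = (star u ⬝ᵥ f) • u := by
  funext i
  simp only [mulVec, vecMulVec_apply, dotProduct, Pi.smul_apply, smul_eq_mul,
    Finset.sum_mul]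
  exact Finset.sum_congr rfl fun j _ => by ring

/-- scalar-source precoder, zero multiplier case: minimize
φ(f) = (σ_s²+σ_i²)Re(fᴴ(Hᴴg gᴴH)f) − 2σ_s²Re((1 − q̃ᴴg)gᴴHf) over ‖f‖₂² ≤ P̄.
If σ_s⁴|1 − gᴴq̃|² ≤ (σ_s²+σ_i²)²P̄‖Hᴴg‖₂², then
f⋆ = σ_s²(1 − gᴴq̃)Hᴴg / ((σ_s²+σ_i²)gᴴHHᴴg) is a feasible global minimizer:
‖f⋆‖₂² ≤ P̄. -/
theorem scalar_precoder_zero_multiplier {M N : ℕ}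
    (g : Fin M → ℂ) (H : Matrix (Fin M) (Fin N) ℂ) (hHg : Hᴴ *ᵥ g ≠ 0)
    (qt : Fin M → ℂ) (σs2 σi2 Pb : ℝ)
    (hσs : 0 < σs2) (hσi : 0 < σi2) (hPb : 0 < Pb)
    (hcase : σs2 ^ 2 * ‖1 - star g ⬝ᵥ qt‖ ^ 2
      ≤ (σs2 + σi2) ^ 2 * Pb * (eucNorm (Hᴴ *ᵥ g)) ^ 2) :
    let u : Fin N → ℂ := Hᴴ *ᵥ g
    let A : Matrix (Fin N) (Fin N) ℂ := vecMulVec u (star u)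
    let φ : (Fin N → ℂ) → ℝ := fun f =>
      (σs2 + σi2) * (star f ⬝ᵥ (A *ᵥ f)).re
        - 2 * σs2 * ((1 - star qt ⬝ᵥ g) * (star u ⬝ᵥ f)).re
    let fs : Fin N → ℂ :=
      (((σs2 : ℂ) * (1 - star g ⬝ᵥ qt)) / (((σs2 + σi2 : ℝ) : ℂ) * (star u ⬝ᵥ u))) • u
    (eucNorm fs) ^ 2 ≤ Pb ∧
      ∀ f : Fin N → ℂ, (eucNorm f) ^ 2 ≤ Pb → φ fs ≤ φ f := by
  intro u A φ fs
  have hu : u ≠ 0 := hHg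
  set s : ℂ := star u ⬝ᵥ u with hs
  have hspos : (0:ℂ) < s := Matrix.dotProduct_star_self_pos_iff.mpr hu
  have hsim : s.im = 0 := (Complex.lt_def.mp hspos).2.symm
  have hsre : 0 < s.re := (Complex.lt_def.mp hspos).1
  set d : ℝ := σs2 + σi2 with hd
  have hdpos : 0 < d := by positivity
  set b : ℂ := 1 - star qt ⬝ᵥ g with hb
  have hbconj : 1 - star g ⬝ᵥ qt = starRingEnd ℂ b := by
    rw [hb]
    simp [Matrix.star_dotProduct g qt, Complex.ext_iff]
  -- quadratic form value
  have hquad : ∀ f : Fin N → ℂ,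
      (star f ⬝ᵥ (A *ᵥ f)).re = Complex.normSq (star u ⬝ᵥ f) := by
    intro f
    have h1 : A *ᵥ f = (star u ⬝ᵥ f) • u := vecMulVec_mulVec' u f
    rw [h1, dotProduct_smul, smul_eq_mul]
    have h2 : star f ⬝ᵥ u = starRingEnd ℂ (star u ⬝ᵥ f) := by
      rw [Matrix.star_dotProduct]; rfl
    rw [h2, Complex.mul_conj]
    simp
  -- value of z at fs
  have hsne : s ≠ 0 := ne_of_gt hspos
  have hdne : ((d:ℂ)) ≠ 0 := by exact_mod_cast ne_of_gt hdpos
  have hzfs : star u ⬝ᵥ fs = (σs2 : ℂ) * starRingEnd ℂ b / (d : ℂ) := by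
    show star u ⬝ᵥ (((σs2 : ℂ) * (1 - star g ⬝ᵥ qt)) / ((d:ℂ) * s)) • u
        = (σs2 : ℂ) * starRingEnd ℂ b / (d : ℂ)
    rw [dotProduct_smul, smul_eq_mul, ← hs, hbconj]
    field_simp
  -- rewrite φ f in terms of z := star u ⬝ᵥ f
  have hφ : ∀ f : Fin N → ℂ, φ f = d * Complex.normSq (star u ⬝ᵥ f)
      - 2 * σs2 * (b * (star u ⬝ᵥ f)).re := by
    intro f; simp only [φ, hquad f, ← hb, ← hd]
  constructor
  · -- feasibility
    have hc : σs2 ^ 2 * Complex.normSq b ≤ d ^ 2 * Pb * s.re := by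
      have h1 : ‖1 - star g ⬝ᵥ qt‖ ^ 2 = Complex.normSq b := by
        rw [hbconj, Complex.sq_norm, Complex.normSq_conj]
      have h2 : (eucNorm u) ^ 2 = s.re := eucNorm_sq u
      calc σs2 ^ 2 * Complex.normSq b = σs2 ^ 2 * ‖1 - star g ⬝ᵥ qt‖ ^ 2 := by
            rw [h1]
        _ ≤ d ^ 2 * Pb * s.re := by rw [← h2]; exact hcase
    have hfs2 : (eucNorm fs) ^ 2 = σs2 ^ 2 * Complex.normSq b / (d ^ 2 * s.re) := by
      rw [eucNorm_sq]
      show (star ((((σs2 : ℂ) * (1 - star g ⬝ᵥ qt)) / ((d:ℂ) * s)) • u) ⬝ᵥ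
        ((((σs2 : ℂ) * (1 - star g ⬝ᵥ qt)) / ((d:ℂ) * s)) • u)).re
          = σs2 ^ 2 * Complex.normSq b / (d ^ 2 * s.re)
      rw [star_smul, smul_dotProduct, dotProduct_smul, ← hs]
      set α : ℂ := ((σs2 : ℂ) * (1 - star g ⬝ᵥ qt)) / ((d:ℂ) * s) with hα
      have hαs : star α • α • s = (Complex.normSq α : ℂ) * s := by
        simp only [smul_eq_mul, ← mul_assoc, Complex.star_def,
          ← Complex.normSq_eq_conj_mul_self]
      rw [hαs]
      have hnsα : Complex.normSq α = σs2 ^ 2 * Complex.normSq b / (d ^ 2 * s.re ^ 2) := by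
        rw [hα, Complex.normSq_div, Complex.normSq_mul, Complex.normSq_mul, hbconj,
          Complex.normSq_conj]
        have h3 : Complex.normSq s = s.re ^ 2 := by
          rw [Complex.normSq_apply, hsim]; ring
        have h4 : Complex.normSq (σs2 : ℂ) = σs2 ^ 2 := by
          rw [Complex.normSq_ofReal]; ring
        have h5 : Complex.normSq (d : ℂ) = d ^ 2 := by
          rw [Complex.normSq_ofReal]; ring
        rw [h3, h4, h5]
      rw [Complex.re_ofReal_mul, hnsα]
      field_simp
    rw [hfs2, div_le_iff₀ (by positivity)]
    nlinarith [hc]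
  · -- global minimizer
    intro f _
    rw [hφ, hφ, hzfs]
    set z : ℂ := star u ⬝ᵥ f with hz
    have h1 : Complex.normSq ((σs2 : ℂ) * starRingEnd ℂ b / (d : ℂ))
        = σs2 ^ 2 * Complex.normSq b / d ^ 2 := by
      rw [Complex.normSq_div, Complex.normSq_mul, Complex.normSq_conj,
        Complex.normSq_ofReal, Complex.normSq_ofReal]
      ring
    have h2 : (b * ((σs2 : ℂ) * starRingEnd ℂ b / (d : ℂ))).re
        = σs2 * Complex.normSq b / d := by
      have : b * ((σs2 : ℂ) * starRingEnd ℂ b / (d : ℂ))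
          = ((σs2 / d : ℝ) : ℂ) * (b * starRingEnd ℂ b) := by
        push_cast; field_simp
      rw [this, Complex.mul_conj, ← Complex.ofReal_mul, Complex.ofReal_re]
      ring
    rw [h1, h2]
    have hre : (b * z).re = b.re * z.re - b.im * z.im := Complex.mul_re b z
    have hnz : Complex.normSq z = z.re ^ 2 + z.im ^ 2 := by
      rw [Complex.normSq_apply]; ring
    have hnb : Complex.normSq b = b.re ^ 2 + b.im ^ 2 := by
      rw [Complex.normSq_apply]; ring
    rw [hre, hnz, hnb]
    rw [← sub_nonneg]
    have hkey : d * (z.re ^ 2 + z.im ^ 2) - 2 * σs2 * (b.re * z.re - b.im * z.im)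
        - (d * (σs2 ^ 2 * (b.re ^ 2 + b.im ^ 2) / d ^ 2)
          - 2 * σs2 * (σs2 * (b.re ^ 2 + b.im ^ 2) / d))
        = ((d * z.re - σs2 * b.re) ^ 2 + (d * z.im + σs2 * b.im) ^ 2) / d := by
      field_simp
      ring
    rw [hkey]
    positivity
end
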